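/- Suppose f : ℝ^d → ℝ is twice continuously differentiable, L-smooth, σ-strongly convex, and has γ-Lipschitz Hessian, with minimizer μ*. Fix μ ∈ ℝ^d and a symmetric positive definite d×d matrix Σ with Σ ⪯ τ^{-1}·I, and suppose ξ·Σ^{-1} ⪯ ∇²f(μ) ⪯ 𝓛·Σ^{-1} for some ξ, 𝓛 > 0. If f(μ) − f(μ*) ≤ ξ²σ³/(8γ²(Lτ^{-1} + 2ξ)²), then −‖∇f(μ)‖²_Σ ≤ −ξ·(f(μ) − f(μ*)), i.e. ∇f(μ)ᵀΣ∇f(μ) ≥ ξ·(f(μ) − f(μ*)). -/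

import Mathlib

open MeasureTheory ProbabilityTheory Matrix
open scoped BigOperators RealInnerProductSpace

noncomputable section

abbrev Vec (d : ℕ) := EuclideanSpace ℝ (Fin d)
abbrev Mat (d : ℕ) := Matrix (Fin d) (Fin d) ℝ

/-- View a Euclidean vector as a plain function. -/
def toPi {d : ℕ} (u : Vec d) : Fin d → ℝ := u
/-- View a plain function as a Euclidean vector. -/
def ofPi {d : ℕ} (u : Fin d → ℝ) : Vec d := WithLp.toLp 2 u

/-- Matrix-vector multiplication on Euclidean space. -/
def mvec {d : ℕ} (A : Mat d) (u : Vec d) : Vec d := ofPi (A.mulVec (toPi u))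

/-- The standard Gaussian measure N(0, I_d) on ℝ^d. -/
def gaussD (d : ℕ) : Measure (Vec d) :=
  (Measure.pi fun _ : Fin d => gaussianReal 0 1).map (MeasurableEquiv.toLp 2 (Fin d → ℝ))

/-- Frobenius norm of a matrix. -/
def matFrobNorm {m n : ℕ} (A : Matrix (Fin m) (Fin n) ℝ) : ℝ :=
  Real.sqrt (∑ i, ∑ j, (A i j) ^ 2)

/-- Operator (spectral) norm of a matrix. -/
def matOpNorm {m n : ℕ} (A : Matrix (Fin m) (Fin n) ℝ) : ℝ :=
  ‖LinearMap.toContinuousLinearMap (Matrix.toEuclideanLin A)‖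

/-- Loewner order `A ⪯ B`. -/
def loeLE {d : ℕ} (A B : Mat d) : Prop := (B - A).PosSemidef

/-- Hessian matrix of `f` at `x`. -/
def hess {d : ℕ} (f : Vec d → ℝ) (x : Vec d) : Mat d :=
  Matrix.of fun i j =>
    iteratedFDeriv ℝ 2 f x ![EuclideanSpace.single i 1, EuclideanSpace.single j 1]

/-- Membership in `S = {Σ symmetric : ζ⁻¹ I ⪯ Σ ⪯ τ⁻¹ I}`. -/
def Smem {d : ℕ} (τ ζ : ℝ) (A : Mat d) : Prop :=
  A.IsSymm ∧ loeLE (ζ⁻¹ • 1) A ∧ loeLE A (τ⁻¹ • 1)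

/-- Membership in `S' = {A symmetric : τ I ⪯ A ⪯ ζ I}`. -/
def S'mem {d : ℕ} (τ ζ : ℝ) (A : Mat d) : Prop :=
  A.IsSymm ∧ loeLE (τ • 1) A ∧ loeLE A (ζ • 1)

/-- The square root of a positive semidefinite matrix (the definition `Matrix.PosSemidef.sqrt`
of the older Mathlib, which has since been removed). -/
def Matrix.PosSemidef.sqrt {d : ℕ} {A : Mat d} (hA : A.PosSemidef) : Mat d :=
  hA.1.eigenvectorUnitary.1 * diagonal ((↑) ∘ (√·) ∘ hA.1.eigenvalues) *
    (star hA.1.eigenvectorUnitary : Mat d)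

/-- The regularized reparameterized objective `Q_α(μ, Σ)`. -/
def Qa {d : ℕ} (f : Vec d → ℝ) (α : ℝ) (μ : Vec d) (S : Mat d) (hS : S.PosSemidef) : ℝ :=
  (∫ u, f (μ + α • mvec hS.sqrt u) ∂ gaussD d) - α ^ 2 / 2 * Real.log S.det

namespace Stmt15Aux

variable {d : ℕ}

lemma inner_eq_dot (u v : Vec d) : ⟪u, v⟫ = toPi u ⬝ᵥ toPi v := by
  simp [PiLp.inner_apply, toPi, dotProduct, mul_comm]

lemma grad_apply (f : Vec d → ℝ) (x v : Vec d) : fderiv ℝ f x v = ⟪gradient f x, v⟫ := by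
  rw [gradient, InnerProductSpace.toDual_symm_apply]

lemma quad_le_opNorm (A : Mat d) (v : Vec d) :
    |toPi v ⬝ᵥ A.mulVec (toPi v)| ≤ matOpNorm A * ‖v‖ ^ 2 := by
  have h1 : toPi v ⬝ᵥ A.mulVec (toPi v)
      = ⟪v, (LinearMap.toContinuousLinearMap (Matrix.toEuclideanLin A)) v⟫ := by
    rw [inner_eq_dot]; rfl
  rw [h1]
  calc |⟪v, (LinearMap.toContinuousLinearMap (Matrix.toEuclideanLin A)) v⟫|
      ≤ ‖v‖ * ‖(LinearMap.toContinuousLinearMap (Matrix.toEuclideanLin A)) v‖ :=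
        abs_real_inner_le_norm _ _
    _ ≤ ‖v‖ * (matOpNorm A * ‖v‖) := by
        gcongr; exact ContinuousLinearMap.le_opNorm _ _
    _ = _ := by ring

lemma vec_sum (v : Vec d) : v = ∑ i, (v i) • (EuclideanSpace.single i 1 : Vec d) := by
  ext j
  rw [WithLp.ofLp_sum, Finset.sum_apply]
  simp [EuclideanSpace.single_apply]

lemma bilin_expand (B : Vec d →L[ℝ] Vec d →L[ℝ] ℝ) (u w : Vec d) :
    B u w = ∑ i, ∑ j, u i * w j *
      B (EuclideanSpace.single i 1) (EuclideanSpace.single j 1) := by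
  conv_lhs => rw [vec_sum u, vec_sum w]
  rw [Finset.sum_comm, map_sum]
  refine Finset.sum_congr rfl fun j _ => ?_
  rw [(B _).map_smul, map_sum B _ Finset.univ, ContinuousLinearMap.sum_apply, Finset.smul_sum]
  refine Finset.sum_congr rfl fun i _ => ?_
  rw [map_smul B, ContinuousLinearMap.smul_apply]
  simp [smul_eq_mul]; ring

lemma hess_quad (f : Vec d → ℝ) (x : Vec d) (v : Vec d) :
    fderiv ℝ (fderiv ℝ f) x v v = toPi v ⬝ᵥ (hess f x).mulVec (toPi v) := by
  rw [bilin_expand]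
  simp only [toPi, dotProduct, Matrix.mulVec, Finset.mul_sum]
  refine Finset.sum_congr rfl fun i _ => Finset.sum_congr rfl fun j _ => ?_
  rw [hess, Matrix.of_apply, iteratedFDeriv_two_apply]
  simp [Matrix.cons_val_zero, Matrix.cons_val_one]
  ring

lemma key_quad (S : Mat d) (hS : S.PosDef) (hSsymm : S.IsSymm) {ξ : ℝ} (hξ : 0 < ξ)
    (H : Mat d) (hlow : (H - ξ • S⁻¹).PosSemidef) (g x : Fin d → ℝ) :
    ξ * (2 * (g ⬝ᵥ x) - x ⬝ᵥ H.mulVec x) ≤ g ⬝ᵥ S.mulVec g := by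
  have hdet : IsUnit S.det := isUnit_iff_ne_zero.2 hS.det_pos.ne'
  have hSinv : (S⁻¹).PosDef := hS.inv
  have hinvS : S⁻¹ * S = 1 := Matrix.nonsing_inv_mul S hdet
  have hsymm' : (S⁻¹)ᵀ = S⁻¹ := by
    rw [Matrix.transpose_nonsing_inv, hSsymm.eq]
  have h1 : ξ * (x ⬝ᵥ (S⁻¹).mulVec x) ≤ x ⬝ᵥ H.mulVec x := by
    have := hlow.dotProduct_mulVec_nonneg x
    simp only [star_trivial, Matrix.sub_mulVec, Matrix.smul_mulVec,
      dotProduct_sub, dotProduct_smul, smul_eq_mul] at this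
    linarith
  set y : Fin d → ℝ := S.mulVec g - ξ • x with hy
  have h2 : 0 ≤ y ⬝ᵥ (S⁻¹).mulVec y := by simpa using hSinv.posSemidef.dotProduct_mulVec_nonneg y
  have e1 : (S⁻¹).mulVec (S.mulVec g) = g := by
    rw [Matrix.mulVec_mulVec, hinvS, Matrix.one_mulVec]
  have e2 : (S.mulVec g) ⬝ᵥ (S⁻¹).mulVec x = g ⬝ᵥ x := by
    rw [Matrix.dotProduct_mulVec]
    congr 1
    rw [← Matrix.mulVec_transpose, hsymm']
    exact e1
  have h2' : 0 ≤ g ⬝ᵥ S.mulVec g - 2 * ξ * (g ⬝ᵥ x) + ξ ^ 2 * (x ⬝ᵥ (S⁻¹).mulVec x) := by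
    have expand : y ⬝ᵥ (S⁻¹).mulVec y
        = g ⬝ᵥ S.mulVec g - 2 * ξ * (g ⬝ᵥ x) + ξ ^ 2 * (x ⬝ᵥ (S⁻¹).mulVec x) := by
      rw [hy, Matrix.mulVec_sub, Matrix.mulVec_smul]
      rw [sub_dotProduct, dotProduct_sub, dotProduct_sub, smul_dotProduct,
        dotProduct_smul, dotProduct_smul, smul_dotProduct]
      rw [e1, e2]
      have e3 : x ⬝ᵥ g = g ⬝ᵥ x := dotProduct_comm _ _
      have e4 : (S.mulVec g) ⬝ᵥ g = g ⬝ᵥ S.mulVec g := dotProduct_comm _ _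
      rw [e3, e4]
      simp [smul_eq_mul]
      ring
    rw [← expand]; exact h2
  nlinarith [h1, h2', hξ.le]

lemma taylor2_lower (φ φ' φ'' : ℝ → ℝ)
    (hφ : ∀ t, HasDerivAt φ (φ' t) t) (hφ' : ∀ t, HasDerivAt φ' (φ'' t) t)
    (m c : ℝ) (hbound : ∀ t ∈ Set.Icc (0:ℝ) 1, m - c * t ≤ φ'' t) :
    φ 0 + φ' 0 + m / 2 - c / 6 ≤ φ 1 := by
  set g : ℝ → ℝ := fun t => φ' t - (φ' 0 + t * m - t ^ 2 * c / 2) with hg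
  set h : ℝ → ℝ := fun t => φ t - (φ 0 + t * φ' 0 + t ^ 2 * m / 2 - t ^ 3 * c / 6) with hh
  have hgd : ∀ t, HasDerivAt g (φ'' t - (m - t * c)) t := by
    intro t
    have p : HasDerivAt (fun t : ℝ => φ' 0 + t * m - t ^ 2 * c / 2) (m - t * c) t := by
      have := (((hasDerivAt_id t).mul_const m).const_add (φ' 0)).sub
        (((hasDerivAt_pow 2 t).mul_const c).div_const 2)
      exact this.congr_deriv (by push_cast; ring)
    exact (hφ' t).sub p
  have hhd : ∀ t, HasDerivAt h (g t) t := by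
    intro t
    have p : HasDerivAt (fun t : ℝ => φ 0 + t * φ' 0 + t ^ 2 * m / 2 - t ^ 3 * c / 6)
        (φ' 0 + t * m - t ^ 2 * c / 2) t := by
      have := ((((hasDerivAt_id t).mul_const (φ' 0)).const_add (φ 0)).add
        (((hasDerivAt_pow 2 t).mul_const m).div_const 2)).sub
        (((hasDerivAt_pow 3 t).mul_const c).div_const 6)
      exact this.congr_deriv (by push_cast; ring)
    exact ((hφ t).sub p).congr_deriv (by rw [hg])
  have hgmono : MonotoneOn g (Set.Icc (0:ℝ) 1) := by
    apply monotoneOn_of_deriv_nonneg (convex_Icc 0 1)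
    · exact fun t _ => ((hgd t).continuousAt).continuousWithinAt
    · exact fun t _ => ((hgd t).differentiableAt).differentiableWithinAt
    · intro t ht
      rw [interior_Icc] at ht
      rw [(hgd t).deriv]
      have := hbound t ⟨ht.1.le, ht.2.le⟩
      linarith [mul_comm c t]
  have hg0 : g 0 = 0 := by simp [hg]
  have hgnn : ∀ t ∈ Set.Icc (0:ℝ) 1, 0 ≤ g t := by
    intro t ht
    have := hgmono (Set.left_mem_Icc.2 zero_le_one) ht ht.1
    rw [hg0] at this; exact this
  have hhmono : MonotoneOn h (Set.Icc (0:ℝ) 1) := by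
    apply monotoneOn_of_deriv_nonneg (convex_Icc 0 1)
    · exact fun t _ => ((hhd t).continuousAt).continuousWithinAt
    · exact fun t _ => ((hhd t).differentiableAt).differentiableWithinAt
    · intro t ht
      rw [interior_Icc] at ht
      rw [(hhd t).deriv]
      exact hgnn t ⟨ht.1.le, ht.2.le⟩
  have := hhmono (Set.left_mem_Icc.2 zero_le_one) (Set.right_mem_Icc.2 zero_le_one) zero_le_one
  simp only [hh] at this
  norm_num at this
  linarith

lemma taylor_lb (f : Vec d → ℝ) (hf : ContDiff ℝ 2 f) {γ : ℝ} (hγ0 : 0 ≤ γ)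
    (hγ : ∀ x y : Vec d, matOpNorm (hess f x - hess f y) ≤ γ * ‖x - y‖)
    (μ v : Vec d) :
    f μ + fderiv ℝ f μ v + (toPi v ⬝ᵥ (hess f μ).mulVec (toPi v)) / 2 - γ * ‖v‖ ^ 3 / 6
      ≤ f (μ + v) := by
  set c : ℝ → Vec d := fun t => μ + t • v with hc
  have hcd : ∀ t : ℝ, HasDerivAt c v t := by
    intro t
    have := ((hasDerivAt_id t).smul_const v).const_add μ
    simpa [hc] using this
  have hfd : Differentiable ℝ f := hf.differentiable (by norm_num)
  have hF1 : ContDiff ℝ 1 (fderiv ℝ f) := hf.fderiv_right (by norm_num)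
  have hFd : Differentiable ℝ (fderiv ℝ f) := hF1.differentiable (by norm_num)
  have hφ : ∀ t, HasDerivAt (fun t => f (c t)) (fderiv ℝ f (c t) v) t :=
    fun t => (hfd (c t)).hasFDerivAt.comp_hasDerivAt t (hcd t)
  have hφ' : ∀ t, HasDerivAt (fun t => fderiv ℝ f (c t) v)
      (toPi v ⬝ᵥ (hess f (c t)).mulVec (toPi v)) t := by
    intro t
    have h1 : HasDerivAt (fun t => fderiv ℝ f (c t)) (fderiv ℝ (fderiv ℝ f) (c t) v) t :=
      (hFd (c t)).hasFDerivAt.comp_hasDerivAt t (hcd t)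
    have h2 := h1.clm_apply (hasDerivAt_const t v)
    simp only [map_zero, add_zero] at h2
    rw [hess_quad f (c t) v] at h2
    exact h2
  have hbound : ∀ t ∈ Set.Icc (0:ℝ) 1,
      (toPi v ⬝ᵥ (hess f μ).mulVec (toPi v)) - (γ * ‖v‖ ^ 3) * t
        ≤ toPi v ⬝ᵥ (hess f (c t)).mulVec (toPi v) := by
    intro t ht
    have hdiff : toPi v ⬝ᵥ (hess f (c t)).mulVec (toPi v)
        - toPi v ⬝ᵥ (hess f μ).mulVec (toPi v)
        = toPi v ⬝ᵥ ((hess f (c t) - hess f μ)).mulVec (toPi v) := by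
      rw [Matrix.sub_mulVec, dotProduct_sub]
    have habs := quad_le_opNorm (hess f (c t) - hess f μ) v
    have hlip := hγ (c t) μ
    have hct : ‖c t - μ‖ = t * ‖v‖ := by
      simp [hc, norm_smul, abs_of_nonneg ht.1]
    rw [hct] at hlip
    have hsq : (0:ℝ) ≤ ‖v‖ ^ 2 := sq_nonneg _
    have h3 : matOpNorm (hess f (c t) - hess f μ) * ‖v‖ ^ 2 ≤ γ * (t * ‖v‖) * ‖v‖ ^ 2 :=
      mul_le_mul_of_nonneg_right hlip hsq
    have h4 : γ * (t * ‖v‖) * ‖v‖ ^ 2 = γ * ‖v‖ ^ 3 * t := by ring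
    have habs2 : |toPi v ⬝ᵥ ((hess f (c t) - hess f μ)).mulVec (toPi v)| ≤ γ * ‖v‖ ^ 3 * t := by
      calc |toPi v ⬝ᵥ ((hess f (c t) - hess f μ)).mulVec (toPi v)|
          ≤ matOpNorm (hess f (c t) - hess f μ) * ‖v‖ ^ 2 := habs
        _ ≤ γ * (t * ‖v‖) * ‖v‖ ^ 2 := h3
        _ = γ * ‖v‖ ^ 3 * t := h4
    have h5 := neg_abs_le (toPi v ⬝ᵥ ((hess f (c t) - hess f μ)).mulVec (toPi v))
    linarith [hdiff]
  have hT := taylor2_lower (fun t => f (c t)) (fun t => fderiv ℝ f (c t) v)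
    (fun t => toPi v ⬝ᵥ (hess f (c t)).mulVec (toPi v)) hφ hφ'
    (toPi v ⬝ᵥ (hess f μ).mulVec (toPi v)) (γ * ‖v‖ ^ 3) hbound
  have hc0 : c 0 = μ := by simp [hc]
  have hc1 : c 1 = μ + v := by simp [hc]
  simp only [hc0, hc1] at hT
  linarith

end Stmt15Aux

set_option maxHeartbeats 1200000 in
/-- when `μ` is close enough to optimality, the `Σ`-weighted gradient
norm dominates the suboptimality gap: `∇f(μ)ᵀ Σ ∇f(μ) ≥ ξ(f(μ) − f(μ*))`. -/
theorem stmt15 {d : ℕ} (hd : 1 ≤ d)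
    (f : Vec d → ℝ) (L σ γ : ℝ) (hL0 : 0 < L) (hσ0 : 0 < σ) (hγ0 : 0 ≤ γ)
    (hf : ContDiff ℝ 2 f)
    (hL : ∀ x y : Vec d, ‖gradient f x - gradient f y‖ ≤ L * ‖x - y‖)
    (hσ : ∀ x y : Vec d, f x - f y ≥ ⟪gradient f y, x - y⟫ + σ / 2 * ‖x - y‖ ^ 2)
    (hγ : ∀ x y : Vec d, matOpNorm (hess f x - hess f y) ≤ γ * ‖x - y‖)
    (μstar : Vec d) (hμstar : ∀ z, f μstar ≤ f z)
    (μ : Vec d) (τ : ℝ) (hτ : 0 < τ)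
    (S : Mat d) (hSsymm : S.IsSymm) (hS : S.PosDef) (hSle : loeLE S (τ⁻¹ • 1))
    (ξ 𝓛 : ℝ) (hξ0 : 0 < ξ) (h𝓛0 : 0 < 𝓛)
    (hlow : loeLE (ξ • S⁻¹) (hess f μ)) (hupp : loeLE (hess f μ) (𝓛 • S⁻¹))
    (hclose : f μ - f μstar ≤ ξ ^ 2 * σ ^ 3 / (8 * γ ^ 2 * (L * τ⁻¹ + 2 * ξ) ^ 2)) :
    ξ * (f μ - f μstar) ≤ ⟪gradient f μ, mvec S (gradient f μ)⟫ := by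
  classical
  have hRHS : ⟪gradient f μ, mvec S (gradient f μ)⟫
      = toPi (gradient f μ) ⬝ᵥ S.mulVec (toPi (gradient f μ)) := by
    rw [Stmt15Aux.inner_eq_dot]; simp only [mvec, toPi, ofPi]
  rw [hRHS]
  set p : Fin d → ℝ := toPi (gradient f μ) with hp
  clear_value p
  have hP0 : (0:ℝ) ≤ p ⬝ᵥ S.mulVec p := by simpa using hS.posSemidef.dotProduct_mulVec_nonneg p
  have hδ0 : 0 ≤ f μ - f μstar := sub_nonneg.2 (hμstar μ)
  rcases eq_or_lt_of_le hδ0 with h0 | hδpos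
  · rw [← h0, mul_zero]; exact hP0
  have hγpos : 0 < γ := by
    rcases hγ0.eq_or_lt with h | h
    · exfalso
      rw [← h] at hclose
      norm_num at hclose
      linarith
    · exact h
  have hmin : IsLocalMin f μstar := Filter.Eventually.of_forall fun z => hμstar z
  have hfd0 : fderiv ℝ f μstar = 0 := hmin.fderiv_eq_zero
  have hgs : ⟪gradient f μstar, μ - μstar⟫ = 0 := by
    rw [← Stmt15Aux.grad_apply, hfd0]; simp
  set v : Vec d := μstar - μ with hv
  clear_value v
  have hnorm : ‖μ - μstar‖ = ‖v‖ := by rw [hv, norm_sub_rev]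
  have hsc : σ / 2 * ‖v‖ ^ 2 ≤ f μ - f μstar := by
    have := hσ μ μstar
    rw [hgs, hnorm] at this
    linarith
  set R := ‖v‖ with hRdef
  clear_value R
  have hR0 : 0 ≤ R := hRdef ▸ norm_nonneg v
  set A := L * τ⁻¹ + 2 * ξ with hA
  clear_value A
  have hτi : 0 < τ⁻¹ := inv_pos.2 hτ
  have hApos : 0 < A := by
    rw [hA]
    have := mul_pos hL0 hτi
    linarith
  have hA2ξ : 2 * ξ ≤ A := by
    rw [hA]
    have := mul_pos hL0 hτi
    linarith
  have hden : 0 < 8 * γ ^ 2 * A ^ 2 := by positivity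
  have hb : (f μ - f μstar) * (8 * γ ^ 2 * A ^ 2) ≤ ξ ^ 2 * σ ^ 3 :=
    (le_div_iff₀ hden).1 hclose
  have hineq : 4 * σ * (γ * A * R) ^ 2 ≤ σ * (ξ * σ) ^ 2 := by nlinarith [hsc, hb]
  have hkey1 : (γ * A * R) ^ 2 ≤ (ξ * σ / 2) ^ 2 := by nlinarith [hineq, hσ0]
  have hγAR0 : 0 ≤ γ * A * R := by positivity
  have hξσ0 : 0 ≤ ξ * σ / 2 := by positivity
  have hkey2 : γ * A * R ≤ ξ * σ / 2 := by
    have h := Real.sqrt_le_sqrt hkey1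
    rwa [Real.sqrt_sq hγAR0, Real.sqrt_sq hξσ0] at h
  have hγR : γ * R ≤ σ / 4 := by nlinarith [hkey2, hA2ξ, mul_nonneg (mul_nonneg hγ0 hR0) hξ0.le, hξ0, mul_nonneg hγ0 hR0]
  have hδR : γ * R ^ 3 / 3 ≤ f μ - f μstar := by nlinarith [hγR, hsc, sq_nonneg R, hσ0, hR0, hδpos]
  have htay := Stmt15Aux.taylor_lb f hf hγ0 hγ μ v
  rw [show μ + v = μstar from by rw [hv]; abel] at htay
  have hq : fderiv ℝ f μ v = p ⬝ᵥ toPi v := by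
    rw [Stmt15Aux.grad_apply, Stmt15Aux.inner_eq_dot, hp]
  rw [hq, ← hRdef] at htay
  set B := toPi v ⬝ᵥ (hess f μ).mulVec (toPi v) with hB
  set q := p ⬝ᵥ toPi v with hqd
  have hk := Stmt15Aux.key_quad S hS hSsymm hξ0 (hess f μ) hlow p (-(toPi v))
  rw [dotProduct_neg, Matrix.mulVec_neg, dotProduct_neg, neg_dotProduct, neg_neg] at hk
  have hfinal : f μ - f μstar ≤ -2 * q - B := by linarith [htay, hδR]
  have hmul := mul_le_mul_of_nonneg_left hfinal hξ0.le
  linarith [hmul, hk]
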